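/- Let N, n, d ≥ 1, let Δs : Fin N → ℝ satisfy Δs i > 0 for all i, for i ∈ Fin N let p' i ∈ ℝ^d, and for each j ∈ Fin n let q̇̄ j > 0 and q̲̇ j < 0. Then the function V : (Fin n → ℝ^d) → ℝ given by V(θ) = (∑_{i ∈ Fin N} max_{j ∈ Fin n} max{ Δs i · ⟨p' i, θ j⟩ / q̇̄ j, Δs i · ⟨p' i, θ j⟩ / q̲̇ j })² is convex on the whole space of parameters θ. -/

import Mathlib

lemma convexOn_finset_sup'_aux {E : Type*} [AddCommMonoid E] [Module ℝ E]
    {ι : Type*} (s : Finset ι) (hs : s.Nonempty) (F : ι → E → ℝ)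
    (h : ∀ i ∈ s, ConvexOn ℝ Set.univ (F i)) :
    ConvexOn ℝ Set.univ (fun x => s.sup' hs (fun i => F i x)) := by
  refine ⟨convex_univ, fun x _ y _ a b ha hb hab => ?_⟩
  refine Finset.sup'_le _ _ fun i hi => ?_
  calc F i (a • x + b • y) ≤ a * F i x + b * F i y :=
        (h i hi).2 (Set.mem_univ x) (Set.mem_univ y) ha hb hab
    _ ≤ a * s.sup' hs (fun i => F i x) + b * s.sup' hs (fun i => F i y) :=
        add_le_add
          (mul_le_mul_of_nonneg_left (Finset.le_sup' (fun i => F i x) hi) ha)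
          (mul_le_mul_of_nonneg_left (Finset.le_sup' (fun i => F i y) hi) hb)

lemma convexOn_finset_sum_aux {E : Type*} [AddCommMonoid E] [Module ℝ E]
    {ι : Type*} (s : Finset ι) (F : ι → E → ℝ)
    (h : ∀ i ∈ s, ConvexOn ℝ Set.univ (F i)) :
    ConvexOn ℝ Set.univ (fun x => ∑ i ∈ s, F i x) := by
  classical
  induction s using Finset.induction with
  | empty => simpa using convexOn_const 0 convex_univ
  | insert _ _ hni ih =>
    simp only [Finset.sum_insert hni]
    exact (h _ (Finset.mem_insert_self _ _)).add
      (ih fun i hi => h i (Finset.mem_insert_of_mem hi))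

lemma convexOn_sq_aux {E : Type*} [AddCommMonoid E] [Module ℝ E]
    {f : E → ℝ} (hf : ConvexOn ℝ Set.univ f) (h0 : ∀ x, 0 ≤ f x) :
    ConvexOn ℝ Set.univ (fun x => f x ^ 2) := by
  refine ⟨convex_univ, fun x _ y _ a b ha hb hab => ?_⟩
  have h1 := hf.2 (Set.mem_univ x) (Set.mem_univ y) ha hb hab
  simp only [smul_eq_mul] at h1 ⊢
  have h2 : f (a • x + b • y) ^ 2 ≤ (a * f x + b * f y) ^ 2 :=
    pow_le_pow_left₀ (h0 _) h1 2
  refine h2.trans ?_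
  nlinarith [mul_nonneg (mul_nonneg ha hb) (sq_nonneg (f x - f y)), h0 x, h0 y]

/-- Convexity assertion of Theorem 3: the closed-form value `V(θ)` of
the no-acceleration-constraints inner problem is convex in `θ : Fin n → ℝ^d`. -/
theorem stmt_13 (N n d : ℕ) (hN : 1 ≤ N) (hn : 1 ≤ n) (hd : 1 ≤ d)
    (Δs : Fin N → ℝ) (hΔs : ∀ i, 0 < Δs i)
    (p' : Fin N → Fin d → ℝ)
    (qdb qdl : Fin n → ℝ) (hqdb : ∀ j, 0 < qdb j) (hqdl : ∀ j, qdl j < 0) :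
    ConvexOn ℝ Set.univ (fun θ : Fin n → Fin d → ℝ =>
      (∑ i, ⨆ j : Fin n,
        max (Δs i * (∑ k, p' i k * θ j k) / qdb j)
            (Δs i * (∑ k, p' i k * θ j k) / qdl j)) ^ 2) := by
  haveI : Nonempty (Fin n) := ⟨⟨0, hn⟩⟩
  have hlin : ∀ (i : Fin N) (j : Fin n) (c : ℝ),
      ConvexOn ℝ Set.univ (fun θ : Fin n → Fin d → ℝ =>
        Δs i * (∑ k, p' i k * θ j k) / c) := by
    intro i j c
    refine ⟨convex_univ, fun x _ y _ a b ha hb hab => le_of_eq ?_⟩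
    have key : (∑ k, p' i k * (a • x + b • y) j k)
        = a * (∑ k, p' i k * x j k) + b * (∑ k, p' i k * y j k) := by
      simp only [Pi.add_apply, Pi.smul_apply, smul_eq_mul, Finset.mul_sum]
      rw [← Finset.sum_add_distrib]
      exact Finset.sum_congr rfl fun k _ => by ring
    simp only [smul_eq_mul]
    rw [key]; ring
  have hmax : ∀ (i : Fin N) (j : Fin n),
      ConvexOn ℝ Set.univ (fun θ : Fin n → Fin d → ℝ =>
        max (Δs i * (∑ k, p' i k * θ j k) / qdb j)
            (Δs i * (∑ k, p' i k * θ j k) / qdl j)) :=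
    fun i j => (hlin i j (qdb j)).sup (hlin i j (qdl j))
  have hsup : ∀ i : Fin N,
      ConvexOn ℝ Set.univ (fun θ : Fin n → Fin d → ℝ =>
        ⨆ j : Fin n, max (Δs i * (∑ k, p' i k * θ j k) / qdb j)
            (Δs i * (∑ k, p' i k * θ j k) / qdl j)) := by
    intro i
    have := convexOn_finset_sup'_aux (Finset.univ : Finset (Fin n)) Finset.univ_nonempty
      (fun j (θ : Fin n → Fin d → ℝ) => max (Δs i * (∑ k, p' i k * θ j k) / qdb j)
            (Δs i * (∑ k, p' i k * θ j k) / qdl j)) (fun j _ => hmax i j)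
    convert this using 2 with θ
    rfl
    exact (Finset.sup'_univ_eq_ciSup (ι := Fin n) (α := ℝ) _).symm
  have hnonneg : ∀ (i : Fin N) (θ : Fin n → Fin d → ℝ),
      0 ≤ ⨆ j : Fin n, max (Δs i * (∑ k, p' i k * θ j k) / qdb j)
            (Δs i * (∑ k, p' i k * θ j k) / qdl j) := by
    intro i θ
    set j₀ : Fin n := Classical.arbitrary (Fin n)
    have hle : (0 : ℝ) ≤ max (Δs i * (∑ k, p' i k * θ j₀ k) / qdb j₀)
        (Δs i * (∑ k, p' i k * θ j₀ k) / qdl j₀) := by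
      rcases le_or_gt 0 (Δs i * (∑ k, p' i k * θ j₀ k)) with h | h
      · exact le_max_of_le_left (div_nonneg h (hqdb j₀).le)
      · exact le_max_of_le_right (div_nonneg_iff.mpr (Or.inr ⟨h.le, (hqdl j₀).le⟩))
    refine hle.trans (le_ciSup (f := fun j : Fin n =>
      max (Δs i * (∑ k, p' i k * θ j k) / qdb j)
          (Δs i * (∑ k, p' i k * θ j k) / qdl j)) ?_ j₀)
    exact Set.Finite.bddAbove (Set.finite_range _)
  have hsum : ConvexOn ℝ Set.univ (fun θ : Fin n → Fin d → ℝ =>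
      ∑ i, ⨆ j : Fin n, max (Δs i * (∑ k, p' i k * θ j k) / qdb j)
            (Δs i * (∑ k, p' i k * θ j k) / qdl j)) :=
    convexOn_finset_sum_aux Finset.univ _ (fun i _ => hsup i)
  exact convexOn_sq_aux hsum (fun θ => Finset.sum_nonneg fun i _ => hnonneg i θ)
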